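/- Let ξ : ℝ³ → ℝ be three times continuously differentiable, and let c > 0 and M ≥ 0 be constants such that D²ξ(x)[ζ,ζ] ≥ c|ζ|² for all x, ζ ∈ ℝ³ and |D³ξ(x)[ζ,ζ,ζ]| ≤ M|ζ|³ for all x with ξ(x) ≤ 0 and all ζ ∈ ℝ³. Then for every x, v ∈ ℝ³ and all real numbers s₁ ≤ s₂ such that ξ(x + σ v) ≤ 0 for every σ ∈ [s₁, s₂], one has exp(−(M/c)|v|(s₂−s₁)) · α(x + s₁ v, v) ≤ α(x + s₂ v, v) ≤ exp((M/c)|v|(s₂−s₁)) · α(x + s₁ v, v). -/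

import Mathlib

noncomputable section

open Real

/-- Euclidean 3-space. -/
abbrev E3 : Type := EuclideanSpace ℝ (Fin 3)

/-- Kinetic distance toward the grazing set:
`α(x,v) = (∇ξ(x)·v)² − 2 (D²ξ(x)[v,v]) ξ(x)`. -/
def kineticAlpha (ξ : E3 → ℝ) (x v : E3) : ℝ :=
  (fderiv ℝ ξ x v) ^ 2 - 2 * (iteratedFDeriv ℝ 2 ξ x ![v, v]) * ξ x

lemma iFD3_apply (ξ : E3 → ℝ) (y v : E3) :
    iteratedFDeriv ℝ 3 ξ y ![v, v, v]
      = fderiv ℝ (fderiv ℝ (fderiv ℝ ξ)) y v v v := by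
  have h := iteratedFDeriv_succ_apply_right (𝕜 := ℝ) (f := ξ) (x := y) (n := 2) ![v, v, v]
  have h2 : Fin.init ![v, v, v] = ![v, v] := by
    funext i; fin_cases i <;> rfl
  rw [h2] at h
  rw [h, iteratedFDeriv_two_apply]
  rfl

lemma alpha_hasDerivAt (ξ : E3 → ℝ) (hξ : ContDiff ℝ 3 ξ) (x v : E3) (s : ℝ) :
    HasDerivAt (fun t => kineticAlpha ξ (x + t • v) v)
      (-2 * iteratedFDeriv ℝ 3 ξ (x + s • v) ![v, v, v] * ξ (x + s • v)) s := by
  set ξ' := fderiv ℝ ξ with hξ'def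
  set ξ'' := fderiv ℝ ξ' with hξ''def
  set ξ''' := fderiv ℝ ξ'' with hξ'''def
  have hξ1 : ContDiff ℝ 2 ξ' := hξ.fderiv_right (by norm_num)
  have hξ2 : ContDiff ℝ 1 ξ'' := hξ1.fderiv_right (by norm_num)
  have hL : HasDerivAt (fun t : ℝ => x + t • v) v s := by
    simpa using ((hasDerivAt_id s).smul_const v).const_add x
  set y := x + s • v with hy
  have hφ : HasDerivAt (fun t => ξ (x + t • v)) (ξ' y v) s :=
    ((hξ.differentiable (by norm_num)).differentiableAt.hasFDerivAt).comp_hasDerivAt s hL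
  have hgF : HasFDerivAt (fun z => ξ' z v)
      ((ContinuousLinearMap.apply ℝ ℝ v).comp (ξ'' y)) y :=
    (ContinuousLinearMap.apply ℝ ℝ v).hasFDerivAt.comp y
      ((hξ1.differentiable (by norm_num)).differentiableAt.hasFDerivAt)
  have hg : HasDerivAt (fun t => ξ' (x + t • v) v) (ξ'' y v v) s :=
    hgF.comp_hasDerivAt (f := fun t : ℝ => x + t • v) s hL
  have hmid : HasFDerivAt (fun z => ξ'' z v)
      ((ContinuousLinearMap.apply ℝ (E3 →L[ℝ] ℝ) v).comp (ξ''' y)) y := by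
    exact (ContinuousLinearMap.apply ℝ (E3 →L[ℝ] ℝ) v).hasFDerivAt.comp y
      ((hξ2.differentiable (by norm_num)).differentiableAt.hasFDerivAt)
  have hhF : HasFDerivAt (fun z => ξ'' z v v)
      ((ContinuousLinearMap.apply ℝ ℝ v).comp
        (((ContinuousLinearMap.apply ℝ (E3 →L[ℝ] ℝ) v)).comp (ξ''' y))) y :=
    (ContinuousLinearMap.apply ℝ ℝ v).hasFDerivAt.comp y hmid
  have hh : HasDerivAt (fun t => ξ'' (x + t • v) v v) (ξ''' y v v v) s :=
    hhF.comp_hasDerivAt (f := fun t : ℝ => x + t • v) s hL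
  have hA : HasDerivAt
      (fun t => (ξ' (x + t • v) v) ^ 2 - 2 * (ξ'' (x + t • v) v v) * ξ (x + t • v))
      (2 * (ξ' y v) * (ξ'' y v v)
        - (2 * (ξ''' y v v v) * ξ y + 2 * (ξ'' y v v) * (ξ' y v))) s := by
    have h1 : HasDerivAt (fun t => (ξ' (x + t • v) v) ^ 2)
        (2 * (ξ' y v) * (ξ'' y v v)) s := by
      simpa [mul_comm, mul_assoc, mul_left_comm] using hg.fun_pow 2
    have h2 : HasDerivAt (fun t => 2 * (ξ'' (x + t • v) v v) * ξ (x + t • v))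
        (2 * (ξ''' y v v v) * ξ y + 2 * (ξ'' y v v) * (ξ' y v)) s := by
      simpa [mul_assoc] using ((hh.const_mul 2).fun_mul hφ)
    exact h1.sub h2
  have heq : (fun t : ℝ => kineticAlpha ξ (x + t • v) v)
      = fun t : ℝ => (ξ' (x + t • v) v) ^ 2 - 2 * (ξ'' (x + t • v) v v) * ξ (x + t • v) := by
    funext t
    simp only [kineticAlpha, iteratedFDeriv_two_apply]
    rfl
  rw [heq, iFD3_apply]
  convert hA using 1
  ring

/-- Velocity Lemma (Lemma 1) along a free-flight segment of the trajectory. -/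
theorem velocity_lemma_free_flight
    (ξ : E3 → ℝ) (hξ : ContDiff ℝ 3 ξ)
    (c M : ℝ) (hc : 0 < c) (hM : 0 ≤ M)
    (hconv : ∀ x ζ : E3, c * ‖ζ‖ ^ 2 ≤ iteratedFDeriv ℝ 2 ξ x ![ζ, ζ])
    (hthird : ∀ x ζ : E3, ξ x ≤ 0 → |iteratedFDeriv ℝ 3 ξ x ![ζ, ζ, ζ]| ≤ M * ‖ζ‖ ^ 3)
    (x v : E3) (s₁ s₂ : ℝ) (hs : s₁ ≤ s₂)
    (hseg : ∀ σ ∈ Set.Icc s₁ s₂, ξ (x + σ • v) ≤ 0) :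
    Real.exp (-(M / c) * ‖v‖ * (s₂ - s₁)) * kineticAlpha ξ (x + s₁ • v) v
        ≤ kineticAlpha ξ (x + s₂ • v) v ∧
      kineticAlpha ξ (x + s₂ • v) v
        ≤ Real.exp ((M / c) * ‖v‖ * (s₂ - s₁)) * kineticAlpha ξ (x + s₁ • v) v := by
  by_cases hv : v = 0
  · subst hv
    have h0 : ∀ z : E3, kineticAlpha ξ z 0 = 0 := by
      intro z
      have : (![(0 : E3), 0] : Fin 2 → E3) = 0 := by funext i; fin_cases i <;> rfl
      simp [kineticAlpha, this]
    simp [h0]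
  · have hvpos : 0 < ‖v‖ := norm_pos_iff.mpr hv
    set K := M / c * ‖v‖ with hK
    have hK0 : 0 ≤ K := mul_nonneg (div_nonneg hM hc.le) (norm_nonneg v)
    set A : ℝ → ℝ := fun t => kineticAlpha ξ (x + t • v) v with hAdef
    set A' : ℝ → ℝ := fun t =>
      -2 * iteratedFDeriv ℝ 3 ξ (x + t • v) ![v, v, v] * ξ (x + t • v) with hA'def
    have hder : ∀ t, HasDerivAt A (A' t) t := fun t => alpha_hasDerivAt ξ hξ x v t
    have hAeq : ∀ t : ℝ, A t =
        (fderiv ℝ ξ (x + t • v) v) ^ 2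
          - 2 * (iteratedFDeriv ℝ 2 ξ (x + t • v) ![v, v]) * ξ (x + t • v) := by
      intro t; rfl
    have hbound : ∀ t ∈ Set.Icc s₁ s₂,
        2 * c * ‖v‖ ^ 2 * (-ξ (x + t • v)) ≤ A t ∧ 0 ≤ A t := by
      intro t ht
      have hφ : ξ (x + t • v) ≤ 0 := hseg t ht
      have h2 := hconv (x + t • v) v
      rw [hAeq t]
      constructor <;>
        nlinarith [sq_nonneg (fderiv ℝ ξ (x + t • v) v),
          mul_nonneg (sub_nonneg.mpr h2) (neg_nonneg.mpr hφ),
          mul_nonneg (mul_nonneg hc.le (sq_nonneg ‖v‖)) (neg_nonneg.mpr hφ)]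
    have hKc : K * (2 * c * ‖v‖ ^ 2) = 2 * M * ‖v‖ ^ 3 := by
      rw [hK]; field_simp
    have key : ∀ t ∈ Set.Icc s₁ s₂, |A' t| ≤ K * A t := by
      intro t ht
      have hφ : ξ (x + t • v) ≤ 0 := hseg t ht
      have h3 := hthird (x + t • v) v hφ
      have h3' : |iteratedFDeriv ℝ 3 ξ (x + t • v) ![v, v, v]| ≥ 0 := abs_nonneg _
      have hb := hbound t ht
      have habs : |A' t| ≤ 2 * M * ‖v‖ ^ 3 * (-ξ (x + t • v)) := by
        rw [hA'def]
        simp only []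
        rw [abs_mul, abs_mul]
        have : |(-2 : ℝ)| = 2 := by norm_num
        rw [this, abs_of_nonpos hφ]
        have hv3 : (0:ℝ) ≤ ‖v‖ ^ 3 := by positivity
        nlinarith [abs_nonneg (iteratedFDeriv ℝ 3 ξ (x + t • v) ![v, v, v])]
      calc |A' t| ≤ 2 * M * ‖v‖ ^ 3 * (-ξ (x + t • v)) := habs
        _ = K * (2 * c * ‖v‖ ^ 2 * (-ξ (x + t • v))) := by rw [← hKc]; ring
        _ ≤ K * A t := mul_le_mul_of_nonneg_left hb.1 hK0
    have hcont : ContinuousOn A (Set.Icc s₁ s₂) :=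
      fun t _ => (hder t).continuousAt.continuousWithinAt
    have hupper : A s₂ ≤ A s₁ * Real.exp (K * (s₂ - s₁)) := by
      have := norm_le_gronwallBound_of_norm_deriv_right_le (δ := A s₁) (K := K) (ε := 0)
        hcont (fun t _ => (hder t).hasDerivWithinAt)
        (by rw [Real.norm_eq_abs, abs_of_nonneg (hbound s₁ (Set.left_mem_Icc.mpr hs)).2])
        (fun t htI => by
          rw [Real.norm_eq_abs, Real.norm_eq_abs,
            abs_of_nonneg (hbound t (Set.Ico_subset_Icc_self htI)).2, add_zero]
          exact key t (Set.Ico_subset_Icc_self htI))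
        s₂ (Set.right_mem_Icc.mpr hs)
      rwa [gronwallBound_ε0, Real.norm_eq_abs,
        abs_of_nonneg (hbound s₂ (Set.right_mem_Icc.mpr hs)).2] at this
    have hlower : A s₁ ≤ A s₂ * Real.exp (K * (s₂ - s₁)) := by
      set B : ℝ → ℝ := fun t => A (s₁ + s₂ - t) with hBdef
      have hBder : ∀ t : ℝ, HasDerivAt B (A' (s₁ + s₂ - t) * (-1)) t := by
        intro t
        exact HasDerivAt.comp t (hder (s₁ + s₂ - t))
          ((hasDerivAt_id t).const_sub (s₁ + s₂))
      have hmem : ∀ t ∈ Set.Ico s₁ s₂, s₁ + s₂ - t ∈ Set.Icc s₁ s₂ := by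
        intro t htI
        constructor <;> [linarith [htI.2]; linarith [htI.1]]
      have := norm_le_gronwallBound_of_norm_deriv_right_le (δ := A s₂) (K := K) (ε := 0)
        (fun t _ => (hBder t).continuousAt.continuousWithinAt)
        (fun t _ => (hBder t).hasDerivWithinAt)
        (by
          have : B s₁ = A s₂ := by rw [hBdef]; norm_num
          rw [this, Real.norm_eq_abs,
            abs_of_nonneg (hbound s₂ (Set.right_mem_Icc.mpr hs)).2])
        (fun t htI => by
          have hm := hmem t htI
          rw [Real.norm_eq_abs, Real.norm_eq_abs, add_zero]
          have hBt : B t = A (s₁ + s₂ - t) := rfl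
          rw [hBt, abs_of_nonneg (hbound _ hm).2, abs_mul]
          have : |(-1 : ℝ)| = 1 := by norm_num
          rw [this, mul_one]
          exact key _ hm)
        s₂ (Set.right_mem_Icc.mpr hs)
      have hB2 : B s₂ = A s₁ := by rw [hBdef]; norm_num
      rwa [gronwallBound_ε0, hB2, Real.norm_eq_abs,
        abs_of_nonneg (hbound s₁ (Set.left_mem_Icc.mpr hs)).2] at this
    constructor
    · have h := mul_le_mul_of_nonneg_left hlower (Real.exp_pos (-(K * (s₂ - s₁)))).le
      have hexp : Real.exp (-(K * (s₂ - s₁))) * (A s₂ * Real.exp (K * (s₂ - s₁))) = A s₂ := by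
        rw [Real.exp_neg]
        field_simp
      rw [hexp] at h
      have harg : -(M / c) * ‖v‖ * (s₂ - s₁) = -(K * (s₂ - s₁)) := by rw [hK]; ring
      rw [harg]
      exact h
    · have harg : (M / c) * ‖v‖ * (s₂ - s₁) = K * (s₂ - s₁) := by rw [hK]; try ring
      rw [harg]
      calc kineticAlpha ξ (x + s₂ • v) v = A s₂ := rfl
        _ ≤ A s₁ * Real.exp (K * (s₂ - s₁)) := hupper
        _ = Real.exp (K * (s₂ - s₁)) * kineticAlpha ξ (x + s₁ • v) v := by ring
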